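/- arXiv:1204.5528 — 2 statements merged into one kernel-verified Lean document; each statement's English description precedes it below -/
import Mathlib

section
/- Let a > b ≥ 1 be integers, U ⊆ ℂⁿ open, f : U → ℂ holomorphic, φ_{a,b}(w) = (w₁^a conj(w₁)^b, …, wₙ^a conj(wₙ)^b), and g = f ∘ φ_{a,b}. For w with φ_{a,b}(w) ∈ U and indices 1 ≤ j < k ≤ n, define C_{j,k}(w) = |conj(w_j)·g_{w_k}(w) − conj(w_k)·g_{w_j}(w)|² − |w_j·g_{w̄_k}(w) − w_k·g_{w̄_j}(w)|². Then C_{j,k}(w) = (a² − b²)·|w_j w_k|²·| w_k^{a−1} conj(w_k)^{b−1} (∂f/∂z_k)(φ_{a,b}(w)) − w_j^{a−1} conj(w_j)^{b−1} (∂f/∂z_j)(φ_{a,b}(w)) |². In particular C_{j,k}(w) ≥ 0 for all j, k and all such w, so g is holomorphic-like. -/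
open Complex ComplexConjugate

/-- The Wirtinger derivative `∂g/∂w_j` of a real-differentiable map `g : ℂⁿ → ℂ`. -/
noncomputable def wdz {n : ℕ} (g : (Fin n → ℂ) → ℂ) (z : Fin n → ℂ) (j : Fin n) : ℂ :=
  (1 / 2 : ℂ) * (fderiv ℝ g z (Pi.single j 1) - Complex.I * fderiv ℝ g z (Pi.single j Complex.I))

/-- The Wirtinger derivative `∂g/∂w̄_j` of a real-differentiable map `g : ℂⁿ → ℂ`. -/
noncomputable def wdzbar {n : ℕ} (g : (Fin n → ℂ) → ℂ) (z : Fin n → ℂ) (j : Fin n) : ℂ :=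
  (1 / 2 : ℂ) * (fderiv ℝ g z (Pi.single j 1) + Complex.I * fderiv ℝ g z (Pi.single j Complex.I))

/-- The homogeneous mixed covering `φ_{a,b}(w) = (w₁^a conj(w₁)^b, …, wₙ^a conj(wₙ)^b)`. -/
noncomputable def phiab {n : ℕ} (a b : ℕ) (w : Fin n → ℂ) : Fin n → ℂ :=
  fun j => w j ^ a * conj (w j) ^ b

/-- The quantity `C_{j,k}` of a real-differentiable mixed function `g`. -/
noncomputable def Cjk {n : ℕ} (g : (Fin n → ℂ) → ℂ) (w : Fin n → ℂ) (j k : Fin n) : ℝ :=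
  (‖conj (w j) * wdz g w k - conj (w k) * wdz g w j‖) ^ 2
    - (‖w j * wdzbar g w k - w k * wdzbar g w j‖) ^ 2


noncomputable def Lab (a b : ℕ) (z : ℂ) : ℂ →L[ℝ] ℂ :=
  ((a : ℂ) * z ^ (a - 1) * conj z ^ b) • (ContinuousLinearMap.id ℝ ℂ)
    + ((b : ℂ) * z ^ a * conj z ^ (b - 1)) • (Complex.conjCLE : ℂ →L[ℝ] ℂ)

lemma Lab_apply (a b : ℕ) (z v : ℂ) :
    Lab a b z v = (a : ℂ) * z ^ (a - 1) * conj z ^ b * v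
      + (b : ℂ) * z ^ a * conj z ^ (b - 1) * conj v := by
  simp [Lab, smul_eq_mul]

lemma hasFDerivAt_Fab (a b : ℕ) (z : ℂ) :
    HasFDerivAt (fun z : ℂ => z ^ a * conj z ^ b) (Lab a b z) z := by
  have h1 : HasFDerivAt (fun z : ℂ => z ^ a)
      (((ContinuousLinearMap.smulRight (1 : ℂ →L[ℂ] ℂ)
        ((a : ℂ) * z ^ (a - 1)))).restrictScalars ℝ) z :=
    ((hasDerivAt_pow a z).hasFDerivAt).restrictScalars ℝ
  have hconj : HasFDerivAt (fun z : ℂ => conj z)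
      (Complex.conjCLE : ℂ →L[ℝ] ℂ) z := Complex.conjCLE.hasFDerivAt
  have h2' : HasFDerivAt (fun u : ℂ => u ^ b)
      (((ContinuousLinearMap.smulRight (1 : ℂ →L[ℂ] ℂ)
        ((b : ℂ) * (conj z) ^ (b - 1)))).restrictScalars ℝ) (conj z) :=
    ((hasDerivAt_pow b (conj z)).hasFDerivAt).restrictScalars ℝ
  have h2 : HasFDerivAt (fun z : ℂ => conj z ^ b)
      ((((ContinuousLinearMap.smulRight (1 : ℂ →L[ℂ] ℂ)
        ((b : ℂ) * (conj z) ^ (b - 1)))).restrictScalars ℝ).comp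
        (Complex.conjCLE : ℂ →L[ℝ] ℂ)) z := h2'.comp z hconj
  have := h1.mul h2
  refine this.congr_fderiv ?_
  ext v
  simp [Lab, smul_eq_mul]
  ring

noncomputable def Phiab {n : ℕ} (a b : ℕ) (w : Fin n → ℂ) :
    (Fin n → ℂ) →L[ℝ] (Fin n → ℂ) :=
  ContinuousLinearMap.pi fun k => (Lab a b (w k)).comp (ContinuousLinearMap.proj k)

lemma hasFDerivAt_phiab {n : ℕ} (a b : ℕ) (w : Fin n → ℂ) :
    HasFDerivAt (phiab a b) (Phiab a b w) w := by
  rw [show phiab a b = fun (w : Fin n → ℂ) k => (w k) ^ a * conj (w k) ^ b from rfl]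
  apply hasFDerivAt_pi.2
  intro k
  exact (hasFDerivAt_Fab a b (w k)).comp w (hasFDerivAt_apply (𝕜 := ℝ) k w)

lemma Phiab_single {n : ℕ} (a b : ℕ) (w : Fin n → ℂ) (j : Fin n) (v : ℂ) :
    Phiab a b w (Pi.single j v) = Pi.single j (Lab a b (w j) v) := by
  ext k
  simp only [Phiab, ContinuousLinearMap.pi_apply, ContinuousLinearMap.comp_apply,
    ContinuousLinearMap.proj_apply]
  rcases eq_or_ne k j with rfl | h
  · simp
  · simp [Pi.single_eq_of_ne h]

lemma key {n : ℕ} (a b : ℕ) (f : (Fin n → ℂ) → ℂ) (w : Fin n → ℂ)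
    (hf : DifferentiableAt ℂ f (phiab a b w)) (j : Fin n) (v : ℂ) :
    fderiv ℝ (fun w => f (phiab a b w)) w (Pi.single j v)
      = ((a : ℂ) * (w j) ^ (a - 1) * conj (w j) ^ b * v
          + (b : ℂ) * (w j) ^ a * conj (w j) ^ (b - 1) * conj v)
        * fderiv ℂ f (phiab a b w) (Pi.single j 1) := by
  have hg : HasFDerivAt (fun w => f (phiab a b w))
      (((fderiv ℂ f (phiab a b w)).restrictScalars ℝ).comp (Phiab a b w)) w :=
    ((hf.hasFDerivAt.restrictScalars ℝ).comp w (hasFDerivAt_phiab a b w))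
  rw [hg.fderiv, ContinuousLinearMap.comp_apply, Phiab_single,
    ContinuousLinearMap.coe_restrictScalars']
  have : (Pi.single j (Lab a b (w j) v) : Fin n → ℂ)
      = (Lab a b (w j) v) • (Pi.single j (1 : ℂ) : Fin n → ℂ) := by
    rw [← Pi.single_smul, smul_eq_mul, mul_one]
  rw [this, map_smul, smul_eq_mul, Lab_apply]


/-- For the pull-back `g = f ∘ φ_{a,b}` of a holomorphic function (`a > b ≥ 1`),
`C_{j,k}(w) = (a²−b²)|w_j w_k|²·|w_k^{a−1} conj(w_k)^{b−1} f_{z_k}(φ(w)) −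
w_j^{a−1} conj(w_j)^{b−1} f_{z_j}(φ(w))|² ≥ 0`; hence `g` is holomorphic-like. -/
theorem mixed_pullback_holomorphic_like (n : ℕ) (a b : ℕ) (hb : 1 ≤ b) (hab : b < a)
    (U : Set (Fin n → ℂ)) (hU : IsOpen U)
    (f : (Fin n → ℂ) → ℂ) (hf : ∀ z ∈ U, DifferentiableAt ℂ f z)
    (w : Fin n → ℂ) (hw : phiab a b w ∈ U) :
    ∀ j k : Fin n,
      Cjk (fun w => f (phiab a b w)) w j k
        = ((a : ℝ) ^ 2 - (b : ℝ) ^ 2) * (‖w j * w k‖) ^ 2 *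
          (‖
            (w k ^ (a - 1) * conj (w k) ^ (b - 1) * fderiv ℂ f (phiab a b w) (Pi.single k 1)
              - w j ^ (a - 1) * conj (w j) ^ (b - 1) *
                fderiv ℂ f (phiab a b w) (Pi.single j 1))‖) ^ 2 ∧
      0 ≤ Cjk (fun w => f (phiab a b w)) w j k := by
  have hf' : DifferentiableAt ℂ f (phiab a b w) := hf _ hw
  obtain ⟨a, rfl⟩ : ∃ a', a = a' + 1 := ⟨a - 1, by omega⟩
  obtain ⟨b, rfl⟩ : ∃ b', b = b' + 1 := ⟨b - 1, by omega⟩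
  intro j k
  set d : Fin n → ℂ :=
    fun i => fderiv ℂ f (phiab (a + 1) (b + 1) w) (Pi.single i 1) with hd
  have hz : ∀ i, wdz (fun w => f (phiab (a + 1) (b + 1) w)) w i
      = ((a : ℂ) + 1) * (w i) ^ a * conj (w i) ^ (b + 1) * d i := by
    intro i
    unfold wdz
    rw [key _ _ f w hf' i 1, key _ _ f w hf' i Complex.I]
    simp only [Nat.add_sub_cancel, map_one, Complex.conj_I, mul_one]
    push_cast
    linear_combination ((1/2 : ℂ) * (((b : ℂ) + 1) * (w i) ^ (a + 1) * conj (w i) ^ b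
      - ((a : ℂ) + 1) * (w i) ^ a * conj (w i) ^ (b + 1)) * d i) * Complex.I_mul_I
  have hzb : ∀ i, wdzbar (fun w => f (phiab (a + 1) (b + 1) w)) w i
      = ((b : ℂ) + 1) * (w i) ^ (a + 1) * conj (w i) ^ b * d i := by
    intro i
    unfold wdzbar
    rw [key _ _ f w hf' i 1, key _ _ f w hf' i Complex.I]
    simp only [Nat.add_sub_cancel, map_one, Complex.conj_I, mul_one]
    push_cast
    linear_combination ((1/2 : ℂ) * (((a : ℂ) + 1) * (w i) ^ a * conj (w i) ^ (b + 1)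
      - ((b : ℂ) + 1) * (w i) ^ (a + 1) * conj (w i) ^ b) * d i) * Complex.I_mul_I
  set E : ℂ := (w k) ^ a * conj (w k) ^ b * d k - (w j) ^ a * conj (w j) ^ b * d j with hE
  have e1 : conj (w j) * wdz (fun w => f (phiab (a + 1) (b + 1) w)) w k
      - conj (w k) * wdz (fun w => f (phiab (a + 1) (b + 1) w)) w j
      = ((a : ℂ) + 1) * (conj (w j) * conj (w k)) * E := by
    rw [hz j, hz k, hE]; ring
  have e2 : w j * wdzbar (fun w => f (phiab (a + 1) (b + 1) w)) w k
      - w k * wdzbar (fun w => f (phiab (a + 1) (b + 1) w)) w j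
      = ((b : ℂ) + 1) * (w j * w k) * E := by
    rw [hzb j, hzb k, hE]; ring
  have hC : Cjk (fun w => f (phiab (a + 1) (b + 1) w)) w j k
      = (((a : ℝ) + 1) ^ 2 - ((b : ℝ) + 1) ^ 2) * (‖w j * w k‖) ^ 2
        * (‖E‖) ^ 2 := by
    rw [Cjk, e1, e2]
    simp only [norm_mul, Complex.norm_conj]
    have ha : ‖(a : ℂ) + 1‖ = (a : ℝ) + 1 := by
      rw [show ((a : ℂ) + 1) = ((a + 1 : ℕ) : ℂ) by push_cast; ring, Complex.norm_natCast]
      push_cast; ring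
    have hbb : ‖(b : ℂ) + 1‖ = (b : ℝ) + 1 := by
      rw [show ((b : ℂ) + 1) = ((b + 1 : ℕ) : ℂ) by push_cast; ring, Complex.norm_natCast]
      push_cast; ring
    rw [ha, hbb]
    ring
  constructor
  · rw [hC]
    simp only [Nat.add_sub_cancel, hE, hd]
    push_cast
    ring
  · rw [hC]
    have h1 : ((b : ℝ) + 1) ^ 2 ≤ ((a : ℝ) + 1) ^ 2 := by
      have : (b : ℝ) + 1 ≤ (a : ℝ) + 1 := by
        have : (b : ℝ) ≤ (a : ℝ) := by exact_mod_cast by omega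
        linarith
      nlinarith [Nat.cast_nonneg (α := ℝ) b]
    have := sub_nonneg.2 h1
    positivity
end

section
/- Let g : ℂⁿ → ℂ be real-differentiable and strongly polar weighted homogeneous: there are positive integers p₁,…,pₙ and integers m_r, m_p with m_p > 0 such that g(r^{p₁}z₁,…,r^{pₙ}zₙ) = r^{m_r} g(z) for all r > 0 and g(e^{ip₁η}z₁,…,e^{ipₙη}zₙ) = e^{i m_p η} g(z) for all η ∈ ℝ. Suppose w ∈ ℂⁿ \ {0} with g(w) ≠ 0 and λ ∈ ℂ satisfies λ·w_j = conj(g_{w_j}(w))/conj(g(w)) − g_{w̄_j}(w)/g(w) for all j = 1,…,n (i.e. ∇θ(w) = λ·w for the argument θ of g). Then λ is a real number, λ·Σ_j p_j|w_j|² = m_p, and in particular λ > 0. -/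
open Complex ComplexConjugate

lemma aux_wirt (A B z : ℂ) : (z.re:ℂ) * A + (z.im:ℂ) * B
    = (1/2)*(A - Complex.I*B)*z + (1/2)*(A + Complex.I*B)*(conj z) := by
  apply Complex.ext <;>
    simp [Complex.mul_re, Complex.mul_im, Complex.add_re, Complex.add_im] <;> ring

/-- The real Fréchet derivative expressed via Wirtinger derivatives. -/
lemma wirt_sum {n : ℕ} (g : (Fin n → ℂ) → ℂ) (w : Fin n → ℂ) (v : Fin n → ℂ) :
    fderiv ℝ g w v = ∑ j, (wdz g w j * v j + wdzbar g w j * conj (v j)) := by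
  set L := fderiv ℝ g w with hL
  have hv : v = ∑ j, ((v j).re • (Pi.single j (1:ℂ) : Fin n → ℂ)
      + (v j).im • (Pi.single j Complex.I : Fin n → ℂ)) := by
    funext k
    simp only [Finset.sum_apply, Pi.add_apply, Pi.smul_apply]
    rw [Finset.sum_eq_single k]
    · simp [real_smul, Complex.re_add_im]
    · intro j _ hj
      simp [Pi.single_eq_of_ne' hj]
    · simp
  calc L v = ∑ j, ((v j).re • L (Pi.single j 1) + (v j).im • L (Pi.single j Complex.I)) := by
        conv_lhs => rw [hv]
        rw [map_sum]
        exact Finset.sum_congr rfl fun j _ => by rw [map_add, map_smul, map_smul]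
    _ = ∑ j, (wdz g w j * v j + wdzbar g w j * conj (v j)) := by
        refine Finset.sum_congr rfl fun j _ => ?_
        rw [wdz, wdzbar, ← hL, real_smul, real_smul]
        exact aux_wirt _ _ _

/-- Polar Euler identity. -/
lemma polar_euler {n : ℕ} (g : (Fin n → ℂ) → ℂ) (hg : Differentiable ℝ g)
    (p : Fin n → ℕ) (mp : ℤ)
    (hpol : ∀ (η : ℝ) (z : Fin n → ℂ),
      g (fun j => Complex.exp (Complex.I * (p j : ℂ) * (η : ℂ)) * z j)
        = Complex.exp (Complex.I * (mp : ℂ) * (η : ℂ)) * g z)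
    (w : Fin n → ℂ) :
    fderiv ℝ g w (fun j => Complex.I * (p j : ℂ) * w j) = Complex.I * (mp:ℂ) * g w := by
  set φ : ℝ → (Fin n → ℂ) := fun η j => Complex.exp (Complex.I * (p j : ℂ) * (η : ℂ)) * w j
  have hφ0 : φ 0 = w := by funext j; simp [φ]
  have hφ : HasDerivAt φ (fun j => Complex.I * (p j : ℂ) * w j) 0 := by
    rw [hasDerivAt_pi]
    intro j
    have h1 : HasDerivAt (fun z : ℂ => Complex.I * (p j : ℂ) * z) (Complex.I * (p j : ℂ)) 0 := by
      simpa using (hasDerivAt_id (0:ℂ)).const_mul (Complex.I * (p j : ℂ))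
    have hc := (h1.cexp).mul_const (w j)
    have hc2 := hc.comp_ofReal (z := 0)
    simpa [φ] using hc2
  have hF : HasFDerivAt g (fderiv ℝ g w) (φ 0) := by
    rw [hφ0]; exact (hg w).hasFDerivAt
  have hgφ := hF.comp_hasDerivAt 0 hφ
  have hrhs : HasDerivAt (fun η : ℝ => Complex.exp (Complex.I * (mp : ℂ) * (η:ℂ)) * g w)
      (Complex.I * (mp:ℂ) * g w) 0 := by
    have h1 : HasDerivAt (fun z : ℂ => Complex.I * (mp : ℂ) * z) (Complex.I * (mp : ℂ)) 0 := by
      simpa using (hasDerivAt_id (0:ℂ)).const_mul (Complex.I * (mp : ℂ))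
    have h2 := (h1.cexp).mul_const (g w)
    have h3 := h2.comp_ofReal (z := 0)
    simpa using h3
  have heq : (g ∘ φ) = fun η : ℝ => Complex.exp (Complex.I * (mp : ℂ) * (η:ℂ)) * g w := by
    funext η; exact hpol η w
  rw [heq] at hgφ
  exact hgφ.unique hrhs

/-- Radial Euler identity. -/
lemma radial_euler {n : ℕ} (g : (Fin n → ℂ) → ℂ) (hg : Differentiable ℝ g)
    (p : Fin n → ℕ) (mr : ℤ)
    (hrad : ∀ r : ℝ, 0 < r → ∀ z : Fin n → ℂ,
      g (fun j => ((r ^ (p j) : ℝ) : ℂ) * z j) = ((r ^ mr : ℝ) : ℂ) * g z)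
    (w : Fin n → ℂ) :
    fderiv ℝ g w (fun j => (p j : ℂ) * w j) = (mr:ℂ) * g w := by
  set ψ : ℝ → (Fin n → ℂ) := fun r j => ((r ^ (p j) : ℝ) : ℂ) * w j
  have hψ1 : ψ 1 = w := by funext j; simp [ψ]
  have hψ : HasDerivAt ψ (fun j => (p j : ℂ) * w j) 1 := by
    rw [hasDerivAt_pi]
    intro j
    have h1 : HasDerivAt (fun r : ℝ => r ^ (p j)) ((p j : ℝ)) 1 := by
      simpa using hasDerivAt_pow (p j) (1:ℝ)
    have h2 := (h1.ofReal_comp).mul_const (w j)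
    simpa [ψ] using h2
  have hF : HasFDerivAt g (fderiv ℝ g w) (ψ 1) := by
    rw [hψ1]; exact (hg w).hasFDerivAt
  have hgψ := hF.comp_hasDerivAt 1 hψ
  have hrhs : HasDerivAt (fun r : ℝ => ((r ^ mr : ℝ) : ℂ) * g w) ((mr:ℂ) * g w) 1 := by
    have h1 : HasDerivAt (fun r : ℝ => r ^ mr) ((mr : ℝ)) 1 := by
      simpa using hasDerivAt_zpow mr (1:ℝ) (Or.inl one_ne_zero)
    have h2 := (h1.ofReal_comp).mul_const (g w)
    simpa using h2
  have heq : (fun r : ℝ => ((r ^ mr : ℝ) : ℂ) * g w) =ᶠ[nhds 1] (g ∘ ψ) := by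
    filter_upwards [Ioi_mem_nhds (zero_lt_one)] with r hr
    exact (hrad r hr w).symm
  exact ((hrhs.congr_of_eventuallyEq heq.symm).unique hgψ).symm

/-- For a strongly polar weighted homogeneous mixed function `g` with positive polar
degree `m_p`, if `∇θ(w) = λ·w` at a point `w ≠ 0` with `g(w) ≠ 0` (i.e.
`λ w_j = conj(g_{w_j})/conj(g) − g_{w̄_j}/g` for all `j`), then `λ` is real,
`λ Σ_j p_j |w_j|² = m_p`, and in particular `λ > 0`. -/
theorem gradient_argument_proportional_implies_positive (n : ℕ)
    (g : (Fin n → ℂ) → ℂ) (hg : Differentiable ℝ g)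
    (p : Fin n → ℕ) (hp : ∀ j, 0 < p j) (mr mp : ℤ) (hmp : 0 < mp)
    (hrad : ∀ r : ℝ, 0 < r → ∀ z : Fin n → ℂ,
      g (fun j => ((r ^ (p j) : ℝ) : ℂ) * z j) = ((r ^ mr : ℝ) : ℂ) * g z)
    (hpol : ∀ (η : ℝ) (z : Fin n → ℂ),
      g (fun j => Complex.exp (Complex.I * (p j : ℂ) * (η : ℂ)) * z j)
        = Complex.exp (Complex.I * (mp : ℂ) * (η : ℂ)) * g z)
    (w : Fin n → ℂ) (hw : w ≠ 0) (hgw : g w ≠ 0) (lam : ℂ)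
    (hlam : ∀ j, lam * w j = conj (wdz g w j) / conj (g w) - wdzbar g w j / g w) :
    lam.im = 0 ∧
    lam * ∑ j, (p j : ℂ) * ((Complex.normSq (w j) : ℝ) : ℂ) = (mp : ℂ) ∧
    0 < lam.re := by
  set A : ℂ := ∑ j, (p j : ℂ) * (wdz g w j * w j) with hAdef
  set B : ℂ := ∑ j, (p j : ℂ) * (wdzbar g w j * conj (w j)) with hBdef
  -- radial Euler identity in Wirtinger form
  have hradE : A + B = (mr:ℂ) * g w := by
    have h := radial_euler g hg p mr hrad w
    rw [wirt_sum] at h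
    rw [hAdef, hBdef, ← Finset.sum_add_distrib, ← h]
    refine Finset.sum_congr rfl fun j _ => ?_
    simp only [map_mul, Complex.conj_natCast]
    ring
  -- polar Euler identity in Wirtinger form
  have hpolE : A - B = (mp:ℂ) * g w := by
    have h := polar_euler g hg p mp hpol w
    rw [wirt_sum] at h
    have h2 : ∑ j, (wdz g w j * (Complex.I * (p j : ℂ) * w j)
        + wdzbar g w j * conj (Complex.I * (p j : ℂ) * w j)) = Complex.I * (A - B) := by
      rw [hAdef, hBdef, mul_sub, Finset.mul_sum, Finset.mul_sum, ← Finset.sum_sub_distrib]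
      refine Finset.sum_congr rfl fun j _ => ?_
      simp only [map_mul, Complex.conj_I, Complex.conj_natCast]
      ring
    rw [h2] at h
    refine mul_left_cancel₀ Complex.I_ne_zero (h.trans (by ring))
  have hcg : conj (g w) ≠ 0 := by simpa using hgw
  have hA2 : A = (((mr:ℂ) + mp)/2) * g w := by linear_combination (hradE + hpolE)/2
  have hB2 : B = (((mr:ℂ) - mp)/2) * g w := by linear_combination (hradE - hpolE)/2
  set S : ℂ := ∑ j, (p j : ℂ) * ((Complex.normSq (w j) : ℝ) : ℂ) with hSdef
  have hlamS : lam * S = (mp : ℂ) := by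
    have h1 : lam * S = conj A / conj (g w) - B / g w := by
      rw [hSdef, Finset.mul_sum, hAdef, hBdef, map_sum, Finset.sum_div, Finset.sum_div,
        ← Finset.sum_sub_distrib]
      refine Finset.sum_congr rfl fun j _ => ?_
      have hns : ((Complex.normSq (w j) : ℝ) : ℂ) = w j * conj (w j) :=
        (Complex.mul_conj (w j)).symm
      calc lam * ((p j : ℂ) * ((Complex.normSq (w j) : ℝ) : ℂ))
          = (p j : ℂ) * conj (w j) * (lam * w j) := by rw [hns]; ring
        _ = (p j : ℂ) * conj (w j) * (conj (wdz g w j) / conj (g w) - wdzbar g w j / g w) := by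
            rw [hlam j]
        _ = conj ((p j : ℂ) * (wdz g w j * w j)) / conj (g w)
            - (p j : ℂ) * (wdzbar g w j * conj (w j)) / g w := by
            simp only [map_mul, Complex.conj_natCast]
            field_simp
    rw [h1, hA2, hB2, map_mul, map_div₀]
    simp only [map_add, map_intCast, map_ofNat]
    rw [mul_div_assoc, mul_div_assoc, div_self hcg, div_self hgw, mul_one, mul_one]
    ring
  set T : ℝ := ∑ j, (p j : ℝ) * Complex.normSq (w j) with hTdef
  have hST : S = ((T:ℝ):ℂ) := by
    rw [hSdef, hTdef]
    push_cast
    rfl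
  have hT : 0 < T := by
    obtain ⟨j, hj⟩ : ∃ j, w j ≠ 0 := by
      by_contra h
      push_neg at h
      exact hw (funext h)
    refine Finset.sum_pos' (fun k _ => ?_) ⟨j, Finset.mem_univ j, ?_⟩
    · exact mul_nonneg (by positivity) (Complex.normSq_nonneg _)
    · have h1 : (0:ℝ) < (p j : ℝ) := by exact_mod_cast hp j
      exact mul_pos h1 (Complex.normSq_pos.2 hj)
  have hT0 : ((T:ℝ):ℂ) ≠ 0 := by
    exact_mod_cast hT.ne'
  have hlamT : lam * ((T:ℝ):ℂ) = (mp:ℂ) := by rw [← hST]; exact hlamS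
  have hlameq : lam = (((mp : ℝ)/T : ℝ) : ℂ) := by
    have h : lam = (mp:ℂ) / ((T:ℝ):ℂ) := by rw [eq_div_iff hT0]; exact hlamT
    rw [h]
    push_cast
    ring
  refine ⟨by rw [hlameq]; simp, hlamS, ?_⟩
  rw [hlameq]
  simp only [Complex.ofReal_re]
  have : (0:ℝ) < (mp:ℝ) := by exact_mod_cast hmp
  positivity
end
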